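/- Let Φ(A) = A − A²/Tr(A) on symmetric psd matrices with positive trace, and suppose X is a random psd matrix with 0 ⪯ X ⪯ B almost surely, where B is a fixed psd matrix with Tr B > 0. Then E[Φ(X)] ⪯ Φ(E[X]) ⪯ Φ(B) (when the expectations exist and E[X], X have positive trace a.s.). -/

import Mathlib

open Matrix

section Aux

/-- Cauchy–Schwarz for dot products. -/
lemma dot_cs {n : ℕ} (x y : Fin n → ℝ) :
    (x ⬝ᵥ y) ^ 2 ≤ (x ⬝ᵥ x) * (y ⬝ᵥ y) := by
  have := Finset.sum_mul_sq_le_sq_mul_sq Finset.univ x y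
  simpa [dotProduct, sq] using this

/-- Frobenius bound: `‖M w‖² ≤ ‖M‖_F² ‖w‖²`. -/
lemma frob_bound {m n : ℕ} (M : Matrix (Fin m) (Fin n) ℝ) (w : Fin n → ℝ) :
    (M *ᵥ w) ⬝ᵥ (M *ᵥ w) ≤ (∑ i, ∑ j, M i j ^ 2) * (w ⬝ᵥ w) := by
  have h : ∀ i, (M *ᵥ w) i * (M *ᵥ w) i ≤ (∑ j, M i j ^ 2) * (w ⬝ᵥ w) := by
    intro i
    have := Finset.sum_mul_sq_le_sq_mul_sq Finset.univ (fun j => M i j) w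
    simpa [Matrix.mulVec, dotProduct, sq] using this
  calc (M *ᵥ w) ⬝ᵥ (M *ᵥ w) = ∑ i, (M *ᵥ w) i * (M *ᵥ w) i := rfl
    _ ≤ ∑ i, (∑ j, M i j ^ 2) * (w ⬝ᵥ w) := Finset.sum_le_sum fun i _ => h i
    _ = _ := (Finset.sum_mul _ _ _).symm

lemma sum_mulVec' {n : ℕ} {Ω : Type*} [Fintype Ω] (A : Ω → Matrix (Fin n) (Fin n) ℝ)
    (v : Fin n → ℝ) : (∑ ω, A ω) *ᵥ v = ∑ ω, A ω *ᵥ v := by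
  ext i
  simp only [Matrix.mulVec, dotProduct, Finset.sum_apply, Matrix.sum_apply,
    Finset.sum_mul]
  rw [Finset.sum_comm]

lemma dot_sum {n : ℕ} {Ω : Type*} [Fintype Ω] (x : Ω → Fin n → ℝ) (y : Fin n → ℝ) :
    (∑ ω, x ω) ⬝ᵥ y = ∑ ω, x ω ⬝ᵥ y := by
  simp only [dotProduct, Finset.sum_apply, Finset.sum_mul]
  rw [Finset.sum_comm]

lemma dot_sum_right {n : ℕ} {Ω : Type*} [Fintype Ω] (y : Fin n → ℝ) (x : Ω → Fin n → ℝ) :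
    y ⬝ᵥ (∑ ω, x ω) = ∑ ω, y ⬝ᵥ x ω := by
  rw [dotProduct_comm, dot_sum]
  exact Finset.sum_congr rfl fun ω _ => dotProduct_comm _ _

lemma dot_self_nonneg {n : ℕ} (x : Fin n → ℝ) : 0 ≤ x ⬝ᵥ x :=
  Finset.sum_nonneg fun i _ => mul_self_nonneg _

lemma conjTranspose_eq_transpose' {m n : ℕ} (M : Matrix (Fin m) (Fin n) ℝ) : Mᴴ = Mᵀ := by
  ext i j; simp [Matrix.conjTranspose_apply]

end Aux

/-- The expected one-step RPCholesky map `Φ(A) = A − A²/Tr A`. -/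
noncomputable def rpcPhi {N : ℕ} (A : Matrix (Fin N) (Fin N) ℝ) :
    Matrix (Fin N) (Fin N) ℝ :=
  A - A.trace⁻¹ • (A * A)

section Phi
variable {N : ℕ}

lemma quadForm_rpcPhi {A : Matrix (Fin N) (Fin N) ℝ} (hA : Aᵀ = A) (v : Fin N → ℝ) :
    v ⬝ᵥ (rpcPhi A *ᵥ v)
      = v ⬝ᵥ (A *ᵥ v) - A.trace⁻¹ * ((A *ᵥ v) ⬝ᵥ (A *ᵥ v)) := by
  have h2 : v ⬝ᵥ ((A * A) *ᵥ v) = (A *ᵥ v) ⬝ᵥ (A *ᵥ v) := by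
    rw [← Matrix.mulVec_mulVec, Matrix.dotProduct_mulVec, ← Matrix.mulVec_transpose, hA]
  rw [rpcPhi, Matrix.sub_mulVec, dotProduct_sub, Matrix.smul_mulVec,
    dotProduct_smul, h2, smul_eq_mul]

lemma isHermitian_rpcPhi {A : Matrix (Fin N) (Fin N) ℝ} (hA : A.IsHermitian) :
    (rpcPhi A).IsHermitian := by
  show (rpcPhi A)ᴴ = rpcPhi A
  rw [rpcPhi, Matrix.conjTranspose_sub, Matrix.conjTranspose_smul, Matrix.conjTranspose_mul,
    hA.eq, star_trivial]

end Phi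

/-- Operator Jensen and monotonicity for `Φ`: for a random psd matrix `X` with
`0 ⪯ X ⪯ B` a.s. (finite probability space), `E[Φ(X)] ⪯ Φ(E[X]) ⪯ Φ(B)`. -/
theorem phi_jensen_monotone {N : ℕ} {Ω : Type*} [Fintype Ω]
    (p : Ω → ℝ) (hp : ∀ ω, 0 ≤ p ω) (hp1 : ∑ ω, p ω = 1)
    (X : Ω → Matrix (Fin N) (Fin N) ℝ)
    (B : Matrix (Fin N) (Fin N) ℝ) (hB : B.PosSemidef)
    (hX : ∀ ω, (X ω).PosSemidef) (hXB : ∀ ω, (B - X ω).PosSemidef)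
    (htrB : 0 < B.trace) (htrX : ∀ ω, 0 < (X ω).trace)
    (htrE : 0 < (∑ ω, p ω • X ω).trace) :
    (rpcPhi (∑ ω, p ω • X ω) - ∑ ω, p ω • rpcPhi (X ω)).PosSemidef ∧
      (rpcPhi B - rpcPhi (∑ ω, p ω • X ω)).PosSemidef := by
  classical
  set S : Matrix (Fin N) (Fin N) ℝ := ∑ ω, p ω • X ω with hS
  have hSh : S.IsHermitian := by
    show Sᴴ = S
    rw [hS, Matrix.conjTranspose_sum]
    exact Finset.sum_congr rfl fun ω _ => by
      rw [Matrix.conjTranspose_smul, star_trivial, (hX ω).1.eq]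
  have hSt : Sᵀ = S := by rw [← conjTranspose_eq_transpose']; exact hSh
  have hBt : Bᵀ = B := by rw [← conjTranspose_eq_transpose']; exact hB.1
  have htrS : S.trace = ∑ ω, p ω * (X ω).trace := by
    rw [hS, Matrix.trace_sum]
    exact Finset.sum_congr rfl fun ω _ => by rw [Matrix.trace_smul, smul_eq_mul]
  have hqS : ∀ v : Fin N → ℝ, v ⬝ᵥ (S *ᵥ v) = ∑ ω, p ω * (v ⬝ᵥ (X ω *ᵥ v)) := by
    intro v
    rw [hS, sum_mulVec', dot_sum_right]
    exact Finset.sum_congr rfl fun ω _ => by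
      rw [Matrix.smul_mulVec, dotProduct_smul, smul_eq_mul]
  constructor
  · -- Jensen part
    refine Matrix.PosSemidef.of_dotProduct_mulVec_nonneg ((isHermitian_rpcPhi hSh).sub ?_) ?_
    · show _ᴴ = _
      rw [Matrix.conjTranspose_sum]
      exact Finset.sum_congr rfl fun ω _ => by
        rw [Matrix.conjTranspose_smul, star_trivial, (isHermitian_rpcPhi (hX ω).1).eq]
    · intro v
      rw [star_trivial, Matrix.sub_mulVec, dotProduct_sub, quadForm_rpcPhi hSt]
      have hform2 : v ⬝ᵥ ((∑ ω, p ω • rpcPhi (X ω)) *ᵥ v)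
          = ∑ ω, p ω * (v ⬝ᵥ (X ω *ᵥ v))
            - ∑ ω, p ω * ((X ω).trace⁻¹ * ((X ω *ᵥ v) ⬝ᵥ (X ω *ᵥ v))) := by
        rw [sum_mulVec', dot_sum_right, ← Finset.sum_sub_distrib]
        refine Finset.sum_congr rfl fun ω _ => ?_
        rw [Matrix.smul_mulVec, dotProduct_smul, smul_eq_mul,
          quadForm_rpcPhi (by rw [← conjTranspose_eq_transpose']; exact (hX ω).1)]
        ring
      rw [hform2, hqS]
      -- remaining scalar inequality
      set y : Fin N → ℝ := S *ᵥ v with hy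
      have hyv : y = ∑ ω, p ω • (X ω *ᵥ v) := by
        rw [hy, hS, sum_mulVec']
        exact Finset.sum_congr rfl fun ω _ => Matrix.smul_mulVec _ _ _
      have hyy : y ⬝ᵥ y = ∑ ω, p ω * ((X ω *ᵥ v) ⬝ᵥ y) := by
        nth_rewrite 1 [hyv]
        rw [dot_sum]
        exact Finset.sum_congr rfl fun ω _ => by
          rw [smul_dotProduct, smul_eq_mul]
      have key : (∑ ω, p ω * ((X ω *ᵥ v) ⬝ᵥ y)) ^ 2
          ≤ (∑ ω, p ω * (X ω).trace)
            * (∑ ω, (p ω / (X ω).trace) * ((X ω *ᵥ v) ⬝ᵥ y) ^ 2) := by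
        have h := Finset.sum_mul_sq_le_sq_mul_sq Finset.univ
          (fun ω => Real.sqrt (p ω * (X ω).trace))
          (fun ω => Real.sqrt (p ω / (X ω).trace) * ((X ω *ᵥ v) ⬝ᵥ y))
        have e1 : ∀ ω : Ω, Real.sqrt (p ω * (X ω).trace)
            * (Real.sqrt (p ω / (X ω).trace) * ((X ω *ᵥ v) ⬝ᵥ y))
            = p ω * ((X ω *ᵥ v) ⬝ᵥ y) := by
          intro ω
          rw [← mul_assoc, ← Real.sqrt_mul (mul_nonneg (hp ω) (htrX ω).le)]
          rw [show p ω * (X ω).trace * (p ω / (X ω).trace) = p ω ^ 2 by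
            field_simp [(htrX ω).ne']]
          rw [Real.sqrt_sq (hp ω)]
        have e2 : ∀ ω : Ω, Real.sqrt (p ω * (X ω).trace) ^ 2 = p ω * (X ω).trace :=
          fun ω => Real.sq_sqrt (mul_nonneg (hp ω) (htrX ω).le)
        have e3 : ∀ ω : Ω, (Real.sqrt (p ω / (X ω).trace) * ((X ω *ᵥ v) ⬝ᵥ y)) ^ 2
            = (p ω / (X ω).trace) * ((X ω *ᵥ v) ⬝ᵥ y) ^ 2 := by
          intro ω
          rw [mul_pow, Real.sq_sqrt (div_nonneg (hp ω) (htrX ω).le)]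
        simp only [e1, e2, e3] at h
        exact h
      set Q : ℝ := ∑ ω, (p ω / (X ω).trace) * ((X ω *ᵥ v) ⬝ᵥ (X ω *ᵥ v)) with hQ
      have hstep : (∑ ω, (p ω / (X ω).trace) * ((X ω *ᵥ v) ⬝ᵥ y) ^ 2) ≤ Q * (y ⬝ᵥ y) := by
        rw [hQ, Finset.sum_mul]
        refine Finset.sum_le_sum fun ω _ => ?_
        rw [mul_assoc]
        refine mul_le_mul_of_nonneg_left ?_ (div_nonneg (hp ω) (htrX ω).le)
        exact dot_cs _ _
      have hQ0 : 0 ≤ Q := Finset.sum_nonneg fun ω _ =>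
        mul_nonneg (div_nonneg (hp ω) (htrX ω).le) (dot_self_nonneg _)
      have hyy0 : 0 ≤ y ⬝ᵥ y := dot_self_nonneg y
      have hkey2 : (y ⬝ᵥ y) * (y ⬝ᵥ y) ≤ S.trace * Q * (y ⬝ᵥ y) := by
        have h1 : (y ⬝ᵥ y) * (y ⬝ᵥ y) = (∑ ω, p ω * ((X ω *ᵥ v) ⬝ᵥ y)) ^ 2 := by
          rw [hyy]; ring
        calc (y ⬝ᵥ y) * (y ⬝ᵥ y)
            = (∑ ω, p ω * ((X ω *ᵥ v) ⬝ᵥ y)) ^ 2 := h1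
          _ ≤ (∑ ω, p ω * (X ω).trace)
              * (∑ ω, (p ω / (X ω).trace) * ((X ω *ᵥ v) ⬝ᵥ y) ^ 2) := key
          _ ≤ (∑ ω, p ω * (X ω).trace) * (Q * (y ⬝ᵥ y)) := by
              refine mul_le_mul_of_nonneg_left hstep ?_
              rw [← htrS]; exact htrE.le
          _ = S.trace * Q * (y ⬝ᵥ y) := by rw [← htrS]; ring
      have hfin : S.trace⁻¹ * (y ⬝ᵥ y) ≤ Q := by
        rcases eq_or_lt_of_le hyy0 with h0 | h0
        · rw [← h0, mul_zero]; exact hQ0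
        · have h1 : y ⬝ᵥ y ≤ S.trace * Q := le_of_mul_le_mul_right (by linarith) h0
          have h2 : S.trace⁻¹ * (y ⬝ᵥ y) ≤ S.trace⁻¹ * (S.trace * Q) :=
            mul_le_mul_of_nonneg_left h1 (inv_nonneg.2 htrE.le)
          rwa [← mul_assoc, inv_mul_cancel₀ htrE.ne', one_mul] at h2
      have hQeq : (∑ ω, p ω * ((X ω).trace⁻¹ * ((X ω *ᵥ v) ⬝ᵥ (X ω *ᵥ v)))) = Q := by
        rw [hQ]
        exact Finset.sum_congr rfl fun ω _ => by ring
      linarith [hfin, hQeq ▸ le_refl Q]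
  · -- monotonicity part
    have hD : (B - S).PosSemidef := by
      have h1 : B - S = ∑ ω, p ω • (B - X ω) := by
        rw [hS]
        rw [show (∑ ω, p ω • (B - X ω)) = (∑ ω, p ω • B) - ∑ ω, p ω • X ω by
          rw [← Finset.sum_sub_distrib]
          exact Finset.sum_congr rfl fun ω _ => smul_sub _ _ _]
        rw [← Finset.sum_smul, hp1, one_smul]
      rw [h1]
      refine Matrix.PosSemidef.of_dotProduct_mulVec_nonneg ?_ ?_
      · show _ᴴ = _
        rw [Matrix.conjTranspose_sum]
        exact Finset.sum_congr rfl fun ω _ => by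
          rw [Matrix.conjTranspose_smul, star_trivial, (hXB ω).1.eq]
      · intro x
        rw [star_trivial, sum_mulVec', dot_sum_right]
        refine Finset.sum_nonneg fun ω _ => ?_
        rw [Matrix.smul_mulVec, dotProduct_smul, smul_eq_mul]
        have := (hXB ω).dotProduct_mulVec_nonneg x
        rw [star_trivial] at this
        exact mul_nonneg (hp ω) this
    obtain ⟨C, hC⟩ : ∃ C : Matrix (Fin N) (Fin N) ℝ, B - S = Cᴴ * C := by
      open scoped MatrixOrder in
      obtain ⟨C, hC⟩ := CStarAlgebra.nonneg_iff_eq_star_mul_self.mp hD.nonneg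
      exact ⟨C, by rw [hC, star_eq_conjTranspose]⟩
    rw [conjTranspose_eq_transpose'] at hC
    set f : ℝ := ∑ i, ∑ j, C i j ^ 2 with hf
    have htrD : B.trace - S.trace = f := by
      rw [← Matrix.trace_sub, hC]
      calc (Cᵀ * C).trace = ∑ j, ∑ i, C i j * C i j := by
            simp [Matrix.trace, Matrix.diag, Matrix.mul_apply]
        _ = f := by rw [Finset.sum_comm, hf]; simp [sq]
    have ha : 0 < S.trace := htrE
    have hb : 0 < B.trace := htrB
    refine Matrix.PosSemidef.of_dotProduct_mulVec_nonneg ((isHermitian_rpcPhi hB.1).sub (isHermitian_rpcPhi hSh)) ?_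
    intro v
    rw [star_trivial, Matrix.sub_mulVec, dotProduct_sub, quadForm_rpcPhi hBt,
      quadForm_rpcPhi hSt]
    set w : Fin N → ℝ := S *ᵥ v with hw
    set u : Fin N → ℝ := (B - S) *ᵥ v with hu
    have hBv : B *ᵥ v = w + u := by
      rw [hw, hu, Matrix.sub_mulVec]; abel
    set y : Fin N → ℝ := C *ᵥ v with hy
    set z : Fin N → ℝ := C *ᵥ w with hz
    have hqD : v ⬝ᵥ u = y ⬝ᵥ y := by
      rw [hu, hC, ← Matrix.mulVec_mulVec, Matrix.dotProduct_mulVec, Matrix.vecMul_transpose]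
    have hwu : w ⬝ᵥ u = z ⬝ᵥ y := by
      rw [hu, hC, ← Matrix.mulVec_mulVec, Matrix.dotProduct_mulVec, Matrix.vecMul_transpose]
    have huu : u ⬝ᵥ u ≤ f * (y ⬝ᵥ y) := by
      have h1 : u = Cᵀ *ᵥ y := by rw [hu, hC, ← Matrix.mulVec_mulVec]
      have h2 := frob_bound Cᵀ y
      have h3 : (∑ i, ∑ j, Cᵀ i j ^ 2) = f := by
        rw [hf, Finset.sum_comm]
        simp [Matrix.transpose_apply]
      rw [h1]; rw [h3] at h2; exact h2
    have hzz : z ⬝ᵥ z ≤ f * (w ⬝ᵥ w) := by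
      have := frob_bound C w
      rwa [← hf, ← hz] at this
    have hsq : 0 ≤ S.trace * S.trace * (y ⬝ᵥ y) - 2 * S.trace * (z ⬝ᵥ y) + z ⬝ᵥ z := by
      have h0 : 0 ≤ (S.trace • y - z) ⬝ᵥ (S.trace • y - z) := dot_self_nonneg _
      have hexp : (S.trace • y - z) ⬝ᵥ (S.trace • y - z)
          = S.trace * S.trace * (y ⬝ᵥ y) - S.trace * (y ⬝ᵥ z)
            - S.trace * (z ⬝ᵥ y) + z ⬝ᵥ z := by
        rw [sub_dotProduct, dotProduct_sub, dotProduct_sub,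
          smul_dotProduct, dotProduct_smul, dotProduct_smul,
          smul_dotProduct]
        simp only [smul_eq_mul]
        ring
      have hcomm : y ⬝ᵥ z = z ⬝ᵥ y := dotProduct_comm _ _
      rw [hexp, hcomm] at h0
      linarith
    have hBvv : v ⬝ᵥ (B *ᵥ v) = v ⬝ᵥ w + y ⬝ᵥ y := by
      rw [hBv, dotProduct_add, hqD]
    have hnB : (B *ᵥ v) ⬝ᵥ (B *ᵥ v)
        = w ⬝ᵥ w + 2 * (z ⬝ᵥ y) + u ⬝ᵥ u := by
      rw [hBv, add_dotProduct, dotProduct_add, dotProduct_add,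
        dotProduct_comm u w, hwu]
      ring
    rw [hBvv, hnB]
    have hba : B.trace = S.trace + f := by linarith
    have key : 0 ≤ S.trace * B.trace * (y ⬝ᵥ y) + B.trace * (w ⬝ᵥ w)
        - S.trace * (w ⬝ᵥ w + 2 * (z ⬝ᵥ y) + u ⬝ᵥ u) := by
      have e : S.trace * B.trace * (y ⬝ᵥ y) + B.trace * (w ⬝ᵥ w)
          - S.trace * (w ⬝ᵥ w + 2 * (z ⬝ᵥ y) + u ⬝ᵥ u)
          = (S.trace * S.trace * (y ⬝ᵥ y) - 2 * S.trace * (z ⬝ᵥ y) + z ⬝ᵥ z)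
            + (f * (w ⬝ᵥ w) - z ⬝ᵥ z)
            + (S.trace * (f * (y ⬝ᵥ y)) - S.trace * (u ⬝ᵥ u)) := by
        rw [hba]; ring
      have h1 : S.trace * (u ⬝ᵥ u) ≤ S.trace * (f * (y ⬝ᵥ y)) :=
        mul_le_mul_of_nonneg_left huu ha.le
      rw [e]
      linarith
    have hval : v ⬝ᵥ w + y ⬝ᵥ y - B.trace⁻¹ * (w ⬝ᵥ w + 2 * (z ⬝ᵥ y) + u ⬝ᵥ u)
        - (v ⬝ᵥ w - S.trace⁻¹ * (w ⬝ᵥ w))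
        = (S.trace * B.trace * (y ⬝ᵥ y) + B.trace * (w ⬝ᵥ w)
          - S.trace * (w ⬝ᵥ w + 2 * (z ⬝ᵥ y) + u ⬝ᵥ u)) / (S.trace * B.trace) := by
      field_simp
      ring
    rw [hval]
    exact div_nonneg key (mul_nonneg ha.le hb.le)
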